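/- For every bounded function φ: [0,∞) → ℝ of class C¹, there exists a sequence (tₙ) of nonnegative real numbers with tₙ → +∞ such that φ(tₙ) → limsup_{t→+∞} φ(t) and φ'(tₙ) → 0. -/

import Mathlib

open Filter

lemma aux_key (φ : ℝ → ℝ) (hd : Differentiable ℝ φ) (hc : Continuous (deriv φ))
    (L : ℝ) (hub : ∀ η > (0:ℝ), ∃ T₁, ∀ t ≥ T₁, φ t < L + η)
    (hfreq : ∀ η > (0:ℝ), ∀ T : ℝ, ∃ t ≥ T, L - η < φ t)
    (ε : ℝ) (hε : 0 < ε) (hε1 : ε ≤ 1) (T : ℝ) :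
    ∃ s ≥ T, |φ s - L| < ε ∧ |deriv φ s| < ε := by
  have hη : (0:ℝ) < ε * ε / 8 := by positivity
  obtain ⟨T₁, hT₁⟩ := hub (ε * ε / 8) hη
  obtain ⟨t₀, ht₀, hval⟩ := hfreq (ε * ε / 8) hη (max (T₁ + 1) (T + 1))
  have ht₀T₁ : T₁ + 1 ≤ t₀ := le_trans (le_max_left _ _) ht₀
  have ht₀T : T + 1 ≤ t₀ := le_trans (le_max_right _ _) ht₀
  by_cases hder : |deriv φ t₀| < ε
  · refine ⟨t₀, by linarith, ?_, hder⟩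
    have h1 : φ t₀ < L + ε * ε / 8 := hT₁ t₀ (by linarith)
    rw [abs_sub_lt_iff]
    constructor <;> nlinarith
  · push_neg at hder
    rcases le_abs.1 hder with hpos | hneg
    · -- derivative ≥ ε at t₀; go right
      set S : Set ℝ := Set.Icc t₀ (t₀ + ε / 2) ∩ {s | deriv φ s ≤ ε / 2} with hS
      have hSclosed : IsClosed S :=
        isClosed_Icc.inter (isClosed_le hc continuous_const)
      have hSne : S.Nonempty := by
        by_contra h
        rw [Set.not_nonempty_iff_eq_empty] at h
        have hgt : ∀ x ∈ interior (Set.Icc t₀ (t₀ + ε / 2)), ε / 2 ≤ deriv φ x := by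
          intro x hx
          by_contra hcon
          have : x ∈ S := ⟨interior_subset hx, le_of_not_ge hcon⟩
          rw [h] at this; exact this
        have := (convex_Icc t₀ (t₀ + ε / 2)).mul_sub_le_image_sub_of_le_deriv
          hd.continuous.continuousOn (hd.differentiableOn) hgt t₀
          ⟨le_refl _, by linarith⟩ (t₀ + ε / 2) ⟨by linarith, le_refl _⟩ (by linarith)
        have h2 : φ (t₀ + ε / 2) < L + ε * ε / 8 := hT₁ _ (by linarith)
        nlinarith
      have hbdd : BddBelow S := ⟨t₀, fun s hs => hs.1.1⟩
      set s₀ := sInf S with hs₀def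
      have hs₀ : s₀ ∈ S := hSclosed.csInf_mem hSne hbdd
      have hle : ∀ s ∈ Set.Ico t₀ s₀, ε / 2 ≤ deriv φ s := by
        intro s hs
        by_contra hcon
        have hmem : s ∈ S := ⟨⟨hs.1, le_trans hs.2.le hs₀.1.2⟩, le_of_not_ge hcon⟩
        exact absurd (csInf_le hbdd hmem) (not_le.2 hs.2)
      have hmono : 0 ≤ φ s₀ - φ t₀ := by
        have := (convex_Icc t₀ s₀).mul_sub_le_image_sub_of_le_deriv
          hd.continuous.continuousOn hd.differentiableOn (C := 0)
          (fun x hx => by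
            rw [interior_Icc] at hx
            linarith [hle x ⟨hx.1.le, hx.2⟩]) t₀ ⟨le_refl _, hs₀.1.1⟩ s₀
          ⟨hs₀.1.1, le_refl _⟩ hs₀.1.1
        linarith
      have hd0 : 0 ≤ deriv φ s₀ := by
        rcases eq_or_lt_of_le hs₀.1.1 with heq | hlt
        · rw [← heq]; linarith
        · have hclmem : s₀ ∈ closure (Set.Ico t₀ s₀) := by
            rw [closure_Ico hlt.ne]; exact ⟨hs₀.1.1, le_refl _⟩
          have hcl : closure (Set.Ico t₀ s₀) ⊆ {x | ε / 2 ≤ deriv φ x} :=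
            (isClosed_le continuous_const hc).closure_subset_iff.2 hle
          have := hcl hclmem
          simp only [Set.mem_setOf_eq] at this
          linarith
      have hv1 : φ s₀ < L + ε * ε / 8 := hT₁ _ (by linarith [hs₀.1.1])
      refine ⟨s₀, by linarith [hs₀.1.1], ?_, ?_⟩
      · rw [abs_sub_lt_iff]; constructor <;> nlinarith
      · have h2' : deriv φ s₀ ≤ ε / 2 := hs₀.2
        rw [abs_lt]; exact ⟨by linarith, by linarith⟩
    · -- derivative ≤ -ε at t₀; go left
      have hpos : deriv φ t₀ ≤ -ε := by linarith
      set S : Set ℝ := Set.Icc (t₀ - ε / 2) t₀ ∩ {s | -(ε / 2) ≤ deriv φ s} with hS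
      have hSclosed : IsClosed S :=
        isClosed_Icc.inter (isClosed_le continuous_const hc)
      have hSne : S.Nonempty := by
        by_contra h
        rw [Set.not_nonempty_iff_eq_empty] at h
        have hgt : ∀ x ∈ interior (Set.Icc (t₀ - ε / 2) t₀), deriv φ x ≤ -(ε / 2) := by
          intro x hx
          by_contra hcon
          have : x ∈ S := ⟨interior_subset hx, le_of_not_ge hcon⟩
          rw [h] at this; exact this
        have := (convex_Icc (t₀ - ε / 2) t₀).image_sub_le_mul_sub_of_deriv_le
          hd.continuous.continuousOn (hd.differentiableOn) hgt (t₀ - ε / 2)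
          ⟨le_refl _, by linarith⟩ t₀ ⟨by linarith, le_refl _⟩ (by linarith)
        have h2 : φ (t₀ - ε / 2) < L + ε * ε / 8 := hT₁ _ (by linarith)
        nlinarith
      have hbdd : BddAbove S := ⟨t₀, fun s hs => hs.1.2⟩
      set s₀ := sSup S with hs₀def
      have hs₀ : s₀ ∈ S := hSclosed.csSup_mem hSne hbdd
      have hle : ∀ s ∈ Set.Ioc s₀ t₀, deriv φ s ≤ -(ε / 2) := by
        intro s hs
        by_contra hcon
        have hmem : s ∈ S := ⟨⟨le_trans hs₀.1.1 hs.1.le, hs.2⟩, le_of_not_ge hcon⟩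
        exact absurd (le_csSup hbdd hmem) (not_le.2 hs.1)
      have hmono : φ t₀ - φ s₀ ≤ 0 := by
        have := (convex_Icc s₀ t₀).image_sub_le_mul_sub_of_deriv_le
          hd.continuous.continuousOn hd.differentiableOn (C := 0)
          (fun x hx => by
            rw [interior_Icc] at hx
            linarith [hle x ⟨hx.1, hx.2.le⟩]) s₀ ⟨le_refl _, hs₀.1.2⟩ t₀
          ⟨hs₀.1.2, le_refl _⟩ hs₀.1.2
        linarith
      have hd0 : deriv φ s₀ ≤ 0 := by
        rcases eq_or_lt_of_le hs₀.1.2 with heq | hlt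
        · rw [heq]; linarith
        · have hclmem : s₀ ∈ closure (Set.Ioc s₀ t₀) := by
            rw [closure_Ioc hlt.ne]; exact ⟨le_refl _, hs₀.1.2⟩
          have hcl : closure (Set.Ioc s₀ t₀) ⊆ {x | deriv φ x ≤ -(ε / 2)} :=
            (isClosed_le hc continuous_const).closure_subset_iff.2 hle
          have := hcl hclmem
          simp only [Set.mem_setOf_eq] at this
          linarith
      have hv1 : φ s₀ < L + ε * ε / 8 := hT₁ _ (by linarith [hs₀.1.1])
      refine ⟨s₀, by linarith [hs₀.1.1], ?_, ?_⟩
      · rw [abs_sub_lt_iff]; constructor <;> nlinarith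
      · have h2' : -(ε / 2) ≤ deriv φ s₀ := hs₀.2
        rw [abs_lt]; exact ⟨by linarith, by linarith⟩

/-- For every bounded C¹ function φ : [0,∞) → ℝ there is a sequence tₙ → +∞ of
nonnegative reals with φ(tₙ) → limsup φ and φ'(tₙ) → 0. -/
theorem stmt_0 (φ : ℝ → ℝ) (hφ : ContDiff ℝ 1 φ)
    (hbound : ∃ M, ∀ t ≥ (0:ℝ), |φ t| ≤ M) :
    ∃ t : ℕ → ℝ, (∀ n, 0 ≤ t n) ∧ Tendsto t atTop atTop ∧
      Tendsto (fun n => φ (t n)) atTop (nhds (limsup φ atTop)) ∧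
      Tendsto (fun n => deriv φ (t n)) atTop (nhds 0) := by
  obtain ⟨M, hM⟩ := hbound
  set L := limsup φ atTop with hL
  have hab : IsBoundedUnder (· ≤ ·) atTop φ :=
    isBoundedUnder_of_eventually_le (a := M)
      (by filter_upwards [eventually_ge_atTop (0:ℝ)] with t ht
          exact (abs_le.1 (hM t ht)).2)
  have hcob : IsCoboundedUnder (· ≤ ·) atTop φ :=
    isCoboundedUnder_le_of_eventually_le atTop (x := -M)
      (by filter_upwards [eventually_ge_atTop (0:ℝ)] with t ht
          exact (abs_le.1 (hM t ht)).1)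
  have hub : ∀ η > (0:ℝ), ∃ T₁, ∀ t ≥ T₁, φ t < L + η := by
    intro η hη
    have := eventually_lt_of_limsup_lt (f := atTop) (u := φ) (b := L + η)
      (by rw [← hL]; linarith) hab
    rw [eventually_atTop] at this
    exact this
  have hfreq : ∀ η > (0:ℝ), ∀ T : ℝ, ∃ t ≥ T, L - η < φ t := by
    intro η hη T
    have := frequently_lt_of_lt_limsup (f := atTop) (u := φ) (b := L - η) hcob
      (by simp only [hL]; linarith)
    rw [frequently_atTop] at this
    exact this T
  have hd : Differentiable ℝ φ := hφ.differentiable one_ne_zero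
  have hc : Continuous (deriv φ) := hφ.continuous_deriv le_rfl
  have key : ∀ n : ℕ, ∃ s, s ≥ (max 0 n : ℝ) ∧ |φ s - L| < 1 / (n + 1) ∧
      |deriv φ s| < 1 / (n + 1) := by
    intro n
    obtain ⟨s, hs1, hs2, hs3⟩ := aux_key φ hd hc L hub hfreq (1 / (n + 1))
      (by positivity)
      (by rw [div_le_one (by positivity)]; linarith [Nat.cast_nonneg (α := ℝ) n])
      (max 0 n)
    exact ⟨s, hs1, hs2, hs3⟩
  choose t ht1 ht2 ht3 using key
  have haux : Tendsto (fun n : ℕ => 1 / ((n : ℝ) + 1)) atTop (nhds 0) :=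
    tendsto_one_div_add_atTop_nhds_zero_nat
  refine ⟨t, fun n => le_trans (le_max_left _ _) (ht1 n), ?_, ?_, ?_⟩
  · exact tendsto_atTop_mono (fun n => le_trans (le_max_right _ _) (ht1 n))
      tendsto_natCast_atTop_atTop
  · rw [tendsto_iff_dist_tendsto_zero]
    apply squeeze_zero (fun n => dist_nonneg) (fun n => ?_) haux
    rw [Real.dist_eq]
    exact (ht2 n).le
  · rw [tendsto_iff_dist_tendsto_zero]
    apply squeeze_zero (fun n => dist_nonneg) (fun n => ?_) haux
    rw [Real.dist_eq, sub_zero]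
    exact (ht3 n).le
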